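/- For matrices K, U, V of compatible sizes, vec((K ∘ (U Vᴴ)) V) = (Vᵀ ⊗ I) diag(vec K) (conj(V) ⊗ I) vec(U). -/

import Mathlib

open Matrix Kronecker

/-- Column-wise vectorization of a matrix: `vec M (j, i) = M i j`. -/
def vec {k m : ℕ} (M : Matrix (Fin k) (Fin m) ℂ) : Fin m × Fin k → ℂ :=
  fun p => M p.2 p.1

/-- vec((K ∘ (U Vᴴ)) V) = (Vᵀ ⊗ I) diag(vec K) (conj(V) ⊗ I) vec(U). -/
theorem vec_hadamard_mul_right (n r : ℕ) (K : Matrix (Fin n) (Fin n) ℂ)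
    (U V : Matrix (Fin n) (Fin r) ℂ) :
    _root_.vec (Matrix.hadamard K (U * Vᴴ) * V) =
      (Vᵀ ⊗ₖ (1 : Matrix (Fin n) (Fin n) ℂ)) *ᵥ
        (Matrix.diagonal (_root_.vec K) *ᵥ
          ((Vᴴᵀ ⊗ₖ (1 : Matrix (Fin n) (Fin n) ℂ)) *ᵥ _root_.vec U)) := by
  funext p
  obtain ⟨c, i⟩ := p
  simp [_root_.vec, mulVec, dotProduct, mul_apply, hadamard, kroneckerMap_apply,
    Matrix.one_apply, diagonal, Fintype.sum_prod_type, Finset.mul_sum,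
    Finset.sum_mul, conjTranspose_apply, transpose_apply]
  exact Finset.sum_congr rfl fun j _ => Finset.sum_congr rfl fun s _ => by ring
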